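/- arXiv:1605.04297 — 2 statements merged into one kernel-verified Lean document; each statement's English description precedes it below -/
import Mathlib

section
/- Every well quasi-ordered permutation class can be expressed as a finite union of atomic classes: if C is a well quasi-ordered permutation class, then there exist finitely many atomic permutation classes C₁, …, C_k with C = C₁ ∪ ⋯ ∪ C_k. -/
open Filter

/-- A permutation of some finite length `n`. -/
abbrev Permu : Type := Σ n : ℕ, Equiv.Perm (Fin n)

/-- `PLe σ π` : the permutation `σ` is contained in `π` as a pattern. -/
def PLe (σ π : Permu) : Prop :=
  ∃ f : Fin σ.1 → Fin π.1, StrictMono f ∧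
    ∀ i j : Fin σ.1, σ.2 i < σ.2 j ↔ π.2 (f i) < π.2 (f j)

/-- A permutation class: a set of permutations closed downward under containment. -/
def IsPermClass (C : Set Permu) : Prop :=
  ∀ σ π : Permu, PLe σ π → π ∈ C → σ ∈ C

/-- The number of permutations of length `n` in `C`. -/
noncomputable def pcount (C : Set Permu) (n : ℕ) : ℕ :=
  Set.ncard {π ∈ C | π.1 = n}

/-- The upper growth rate of a class, as an extended real. -/
noncomputable def ugr (C : Set Permu) : EReal :=
  limsup (fun n : ℕ => (((pcount C n : ℝ) ^ ((n : ℝ)⁻¹) : ℝ) : EReal)) atTop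

/-- The lower growth rate of a class, as an extended real. -/
noncomputable def lgr (C : Set Permu) : EReal :=
  liminf (fun n : ℕ => (((pcount C n : ℝ) ^ ((n : ℝ)⁻¹) : ℝ) : EReal)) atTop
/-- A set of permutations is well quasi-ordered if it contains no infinite antichain
under the containment order. -/
def Wqo (S : Set Permu) : Prop :=
  ¬ ∃ f : ℕ → Permu, (∀ n, f n ∈ S) ∧ ∀ i j : ℕ, i ≠ j → ¬ PLe (f i) (f j)
/-- A set of permutations is atomic if it satisfies the joint embedding property. -/
def Atomic (A : Set Permu) : Prop :=
  ∀ σ ∈ A, ∀ τ ∈ A, ∃ π ∈ A, PLe σ π ∧ PLe τ π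
lemma PLe_refl (π : Permu) : PLe π π :=
  ⟨id, strictMono_id, fun _ _ => Iff.rfl⟩

lemma PLe_trans {a b c : Permu} (h1 : PLe a b) (h2 : PLe b c) : PLe a c := by
  obtain ⟨f, hf, hf2⟩ := h1
  obtain ⟨g, hg, hg2⟩ := h2
  exact ⟨g ∘ f, hg.comp hf, fun i j => (hf2 i j).trans (hg2 _ _)⟩

lemma PLe_size {a b : Permu} (h : PLe a b) : a.1 ≤ b.1 := by
  obtain ⟨f, hf, -⟩ := h
  simpa using Fintype.card_le_of_injective f hf.injective

lemma strictMono_fin_id {n : ℕ} (f : Fin n → Fin n) (hf : StrictMono f) : f = id := by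
  have hs : Function.Surjective f := Finite.injective_iff_surjective.1 hf.injective
  have hwf : WellFoundedLT (Fin n) := inferInstance
  exact (@StrictMono.range_inj (Fin n) (Fin n) _ _ hwf f id hf strictMono_id).1
    (by rw [Set.range_eq_univ.2 hs, Set.range_id])

lemma PLe_eq_of_size {a b : Permu} (h : PLe a b) (hs : a.1 = b.1) : a = b := by
  obtain ⟨n, u⟩ := a
  obtain ⟨m, v⟩ := b
  cases hs
  obtain ⟨f, hf, h2⟩ := h
  rw [strictMono_fin_id f hf] at h2
  simp only [id_eq] at h2
  -- u and v have the same relative order, so u = v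
  have key : u = v := by
    -- consider w = u ∘ v.symm; it is strictly monotone
    have hw : StrictMono (fun x => u (v.symm x)) := by
      intro x y hxy
      have := (h2 (v.symm x) (v.symm y)).2 (by simpa using hxy)
      exact this
    have hid := strictMono_fin_id _ hw
    apply Equiv.ext
    intro i
    have h3 : u i = v i := by simpa using congrFun hid (v i)
    exact h3
  rw [key]

lemma PLe_pwo {C : Set Permu} (hwqo : Wqo C) :
    ∀ f : ℕ → Permu, (∀ n, f n ∈ C) → ∃ m n : ℕ, m < n ∧ PLe (f m) (f n) := by
  intro f hf
  by_contra hbad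
  push_neg at hbad
  -- extract a subsequence along which sizes are monotone
  obtain ⟨g, hg⟩ := exists_increasing_or_nonincreasing_subseq' (α := ℕ) (· ≤ ·) (fun n => (f n).1)
  rcases hg with hstep | hanti
  · -- sizes nondecreasing: the subsequence is an antichain
    have hmono : ∀ m n : ℕ, m ≤ n → (f (g m)).1 ≤ (f (g n)).1 := by
      intro m n hmn
      induction hmn with
      | refl => exact le_rfl
      | step _ ih => exact ih.trans (hstep _)
    apply hwqo
    refine ⟨fun n => f (g n), fun n => hf _, ?_⟩
    intro i j hij hle
    rcases lt_or_gt_of_ne hij with h | h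
    · exact hbad _ _ (g.strictMono h) hle
    · -- j < i, and PLe (f (g i)) (f (g j)) with sizes nondecreasing
      have h1 : (f (g j)).1 ≤ (f (g i)).1 := hmono j i h.le
      have h2 : (f (g i)).1 ≤ (f (g j)).1 := PLe_size hle
      have heq : f (g i) = f (g j) := PLe_eq_of_size hle (le_antisymm h2 h1)
      have hgood : PLe (f (g j)) (f (g i)) := by rw [heq]; exact PLe_refl _
      exact hbad _ _ (g.strictMono h) hgood
  · -- sizes strictly decreasing: impossible in ℕ
    have hdec : ∀ m n : ℕ, m < n → (f (g n)).1 < (f (g m)).1 := by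
      intro m n hmn
      exact lt_of_not_ge fun hge => hanti m n hmn hge
    have : ∀ k : ℕ, (f (g k)).1 + k ≤ (f (g 0)).1 := by
      intro k
      induction k with
      | zero => simp
      | succ n ih =>
        have := hdec n (n+1) (Nat.lt_succ_self n)
        omega
    have := this ((f (g 0)).1 + 1)
    omega


/-- Every well quasi-ordered permutation class is a finite union of
atomic permutation classes. -/
theorem wqo_finite_union_of_atomic
    (C : Set Permu) (hC : IsPermClass C) (hwqo : Wqo C) :
    ∃ (k : ℕ) (A : Fin k → Set Permu),
      (∀ i, IsPermClass (A i) ∧ Atomic (A i)) ∧ C = ⋃ i, A i := by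
  have hpwo := PLe_pwo hwqo
  -- the type of subclasses of C
  let T := {D : Set Permu // D ⊆ C ∧ IsPermClass D}
  -- strict inclusion on T is well-founded
  haveI : IsIrrefl T (fun a b : T => a.1 ⊂ b.1) := ⟨fun _ => ssubset_irrefl _⟩
  haveI : IsTrans T (fun a b : T => a.1 ⊂ b.1) := ⟨fun _ _ _ h1 h2 => h1.trans h2⟩
  haveI : IsStrictOrder T (fun a b : T => a.1 ⊂ b.1) := ⟨⟩
  have hwf : WellFounded (fun a b : T => a.1 ⊂ b.1) := by
    rw [RelEmbedding.wellFounded_iff_isEmpty]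
    constructor
    intro e
    have hdesc : ∀ n : ℕ, (e (n+1)).1 ⊂ (e n).1 := fun n => e.map_rel_iff.2 (Nat.lt_succ_self n)
    have hmono : ∀ m n : ℕ, m ≤ n → (e n).1 ⊆ (e m).1 := by
      intro m n hmn
      induction hmn with
      | refl => exact subset_rfl
      | step _ ih => exact (hdesc _).subset.trans ih
    choose x hx1 hx2 using fun n => Set.exists_of_ssubset (hdesc n)
    obtain ⟨m, n, hmn, hle⟩ := hpwo x (fun n => (e n).2.1 (hx1 n))
    -- x n ∈ e n ⊆ e (m+1), so x m ∈ e (m+1) by down-closedness, contradiction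
    have hxn : x n ∈ (e (m+1)).1 := hmono (m+1) n hmn (hx1 n)
    exact hx2 m ((e (m+1)).2.2 _ _ hle hxn)
  -- by well-founded induction, every subclass is a finite union of atomic classes
  have main : ∀ D : T, ∃ l : List (Set Permu),
      (∀ A ∈ l, IsPermClass A ∧ Atomic A) ∧ D.1 = {x | ∃ A ∈ l, x ∈ A} := by
    intro D
    induction D using hwf.induction with
    | _ D IH =>
      by_cases hdir : Atomic D.1
      · refine ⟨[D.1], ?_, ?_⟩
        · intro A hA
          simp only [List.mem_singleton] at hA
          subst hA
          exact ⟨D.2.2, hdir⟩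
        · ext x; simp
      · -- not atomic: split
        unfold Atomic at hdir
        push_neg at hdir
        obtain ⟨σ, hσ, τ, hτ, hsep⟩ := hdir
        set E₁ : Set Permu := {x ∈ D.1 | ¬ PLe σ x} with hE₁
        set E₂ : Set Permu := {x ∈ D.1 | ¬ PLe τ x} with hE₂
        have hcl₁ : IsPermClass E₁ := by
          intro a b hab hb
          exact ⟨D.2.2 a b hab hb.1, fun h => hb.2 (PLe_trans h hab)⟩
        have hcl₂ : IsPermClass E₂ := by
          intro a b hab hb
          exact ⟨D.2.2 a b hab hb.1, fun h => hb.2 (PLe_trans h hab)⟩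
        have hss₁ : E₁ ⊂ D.1 :=
          ⟨fun x hx => hx.1, fun h => (h hσ).2 (PLe_refl σ)⟩
        have hss₂ : E₂ ⊂ D.1 :=
          ⟨fun x hx => hx.1, fun h => (h hτ).2 (PLe_refl τ)⟩
        obtain ⟨l₁, hl₁, hu₁⟩ := IH ⟨E₁, hss₁.subset.trans D.2.1, hcl₁⟩ hss₁
        obtain ⟨l₂, hl₂, hu₂⟩ := IH ⟨E₂, hss₂.subset.trans D.2.1, hcl₂⟩ hss₂
        have hu₁' : E₁ = {x | ∃ A ∈ l₁, x ∈ A} := hu₁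
        have hu₂' : E₂ = {x | ∃ A ∈ l₂, x ∈ A} := hu₂
        refine ⟨l₁ ++ l₂, ?_, ?_⟩
        · intro A hA
          rcases List.mem_append.1 hA with h | h
          exacts [hl₁ A h, hl₂ A h]
        · ext x
          constructor
          · intro hx
            have : x ∈ E₁ ∨ x ∈ E₂ := by
              by_contra hcon
              push_neg at hcon
              simp only [hE₁, hE₂, Set.mem_setOf_eq, Set.mem_sep_iff, not_and, not_not] at hcon
              exact hsep x hx (hcon.1 hx) (hcon.2 hx)
            rcases this with h | h
            · have := hu₁' ▸ h
              obtain ⟨A, hA, hxA⟩ := this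
              exact ⟨A, List.mem_append.2 (Or.inl hA), hxA⟩
            · have := hu₂' ▸ h
              obtain ⟨A, hA, hxA⟩ := this
              exact ⟨A, List.mem_append.2 (Or.inr hA), hxA⟩
          · rintro ⟨A, hA, hxA⟩
            rcases List.mem_append.1 hA with h | h
            · exact hss₁.subset (hu₁' ▸ (⟨A, h, hxA⟩ : ∃ B ∈ l₁, x ∈ B) : x ∈ E₁)
            · exact hss₂.subset (hu₂' ▸ (⟨A, h, hxA⟩ : ∃ B ∈ l₂, x ∈ B) : x ∈ E₂)
  obtain ⟨l, hl, hu⟩ := main ⟨C, subset_rfl, hC⟩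
  have hu' : C = {x | ∃ A ∈ l, x ∈ A} := hu
  refine ⟨l.length, fun i => l.get i, fun i => hl _ (l.get_mem i), ?_⟩
  rw [hu']
  ext x
  simp only [Set.mem_setOf_eq, Set.mem_iUnion]
  constructor
  · rintro ⟨A, hA, hxA⟩
    obtain ⟨i, rfl⟩ := List.mem_iff_get.1 hA
    exact ⟨i, hxA⟩
  · rintro ⟨i, hxA⟩
    exact ⟨l.get i, l.get_mem i, hxA⟩
end

section
/- The upper growth rate of a well quasi-ordered permutation class is attained by an atomic subclass: if C is a well quasi-ordered permutation class, then there exists an atomic permutation class A with A ⊆ C and ugr(A) = ugr(C). -/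
open Filter

/-! ### Auxiliary lemmas -/

lemma PLe.refl (σ : Permu) : PLe σ σ :=
  ⟨id, strictMono_id, fun _ _ => Iff.rfl⟩

lemma PLe.trans {σ τ π : Permu} (h₁ : PLe σ τ) (h₂ : PLe τ π) : PLe σ π := by
  obtain ⟨f, hf, hfc⟩ := h₁
  obtain ⟨g, hg, hgc⟩ := h₂
  exact ⟨g ∘ f, hg.comp hf, fun i j => (hfc i j).trans (hgc (f i) (f j))⟩

lemma PLe.len_le {σ π : Permu} (h : PLe σ π) : σ.1 ≤ π.1 := by
  obtain ⟨f, hf, -⟩ := h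
  simpa using Fintype.card_le_of_injective f hf.injective

lemma finite_fiber (n : ℕ) : {π : Permu | π.1 = n}.Finite := by
  have : {π : Permu | π.1 = n} ⊆ Set.range (Sigma.mk n) := by
    rintro ⟨m, σ⟩ (rfl : m = n)
    exact ⟨σ, rfl⟩
  exact (Set.finite_range _).subset this

lemma finite_len_le (L : ℕ) : {π : Permu | π.1 ≤ L}.Finite := by
  have : {π : Permu | π.1 ≤ L} ⊆ ⋃ n ∈ Set.Iic L, {π : Permu | π.1 = n} := by
    intro π hπ
    exact Set.mem_biUnion hπ rfl
  exact ((Set.finite_Iic L).biUnion fun n _ => finite_fiber n).subset this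

/-- There is no "bad sequence" (a sequence with no upward-comparable pair `i < j`)
inside a well quasi-ordered set. -/
lemma no_bad_seq {C : Set Permu} (hwqo : Wqo C) (x : ℕ → Permu)
    (hxC : ∀ i, x i ∈ C) (hbad : ∀ i j : ℕ, i < j → ¬ PLe (x i) (x j)) : False := by
  have hinj : Function.Injective x := by
    intro i j hij
    rcases lt_trichotomy i j with h | h | h
    · exact absurd (hij ▸ PLe.refl (x i)) (hbad i j h)
    · exact h
    · exact absurd (hij ▸ PLe.refl (x j)) (hbad j i h)
  have step : ∀ m : ℕ, ∃ n, m < n ∧ ∀ j ≤ m, ¬ PLe (x n) (x j) := by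
    intro m
    set L := Finset.sup (Finset.range (m+1)) (fun j => (x j).1) with hL
    have hBad : {n : ℕ | ∃ j ≤ m, PLe (x n) (x j)}.Finite := by
      have hsub : {n : ℕ | ∃ j ≤ m, PLe (x n) (x j)} ⊆ x ⁻¹' {π : Permu | π.1 ≤ L} := by
        rintro n ⟨j, hj, hle⟩
        exact le_trans hle.len_le (Finset.le_sup (f := fun j => (x j).1)
          (Finset.mem_range.2 (Nat.lt_succ_of_le hj)))
      exact ((finite_len_le L).preimage hinj.injOn).subset hsub
    obtain ⟨N, hN⟩ := hBad.bddAbove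
    refine ⟨max m N + 1, by omega, fun j hj hple => ?_⟩
    have : max m N + 1 ≤ N := hN ⟨j, hj, hple⟩
    omega
  let g : ℕ → ℕ := fun k => Nat.rec 0 (fun _ m => Classical.choose (step m)) k
  have hg : ∀ k, g (k+1) = Classical.choose (step (g k)) := fun k => rfl
  have hgs : ∀ k, g k < g (k+1) ∧ ∀ j ≤ g k, ¬ PLe (x (g (k+1))) (x j) := by
    intro k
    rw [hg]
    exact ⟨(Classical.choose_spec (step (g k))).1, (Classical.choose_spec (step (g k))).2⟩
  have hgmono : StrictMono g := strictMono_nat_of_lt_succ fun k => (hgs k).1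
  apply hwqo
  refine ⟨x ∘ g, fun n => hxC _, fun i j hij => ?_⟩
  rcases lt_or_gt_of_ne hij with h | h
  · exact hbad _ _ (hgmono h)
  · obtain ⟨i, rfl⟩ : ∃ i', i = i' + 1 := ⟨i - 1, by omega⟩
    exact (hgs i).2 (g j) (hgmono.monotone (by omega))

/-- subsets (ordered by strict inclusion) of a wqo class, each closed downward,
form a well-founded order. -/
lemma wf_downsets {C : Set Permu} (hwqo : Wqo C) :
    WellFounded (fun (D E : {D : Set Permu // D ⊆ C ∧ IsPermClass D}) => D.1 ⊂ E.1) := by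
  haveI : IsIrrefl {D : Set Permu // D ⊆ C ∧ IsPermClass D} (fun D E => D.1 ⊂ E.1) :=
    ⟨fun a => ssubset_irrefl a.1⟩
  haveI : IsTrans {D : Set Permu // D ⊆ C ∧ IsPermClass D} (fun D E => D.1 ⊂ E.1) :=
    ⟨fun _ _ _ h1 h2 => h1.trans h2⟩
  haveI : IsStrictOrder {D : Set Permu // D ⊆ C ∧ IsPermClass D} (fun D E => D.1 ⊂ E.1) := {}
  rw [RelEmbedding.wellFounded_iff_isEmpty]
  constructor
  intro emb
  set E : ℕ → Set Permu := fun n => (emb n).1 with hE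
  have hstep : ∀ i j : ℕ, j < i → E i ⊂ E j := fun i j h => emb.map_rel_iff.2 h
  have hanti : ∀ i j : ℕ, j ≤ i → E i ⊆ E j := by
    intro i j h
    rcases eq_or_lt_of_le h with rfl | h
    · exact subset_rfl
    · exact (hstep i j h).subset
  choose x hx₁ hx₂ using fun n => Set.exists_of_ssubset (hstep (n+1) n (Nat.lt_succ_self n))
  exact no_bad_seq hwqo x (fun n => (emb n).2.1 (hx₁ n)) (fun i j hij hple =>
    hx₂ i ((emb (i+1)).2.2 _ _ hple (hanti j (i+1) hij (hx₁ j))))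

noncomputable def gterm (C : Set Permu) (n : ℕ) : ℝ := (pcount C n : ℝ) ^ ((n : ℝ)⁻¹)

lemma gterm_nonneg (C : Set Permu) (n : ℕ) : 0 ≤ gterm C n :=
  Real.rpow_nonneg (Nat.cast_nonneg _) _

lemma ugr_eq (C : Set Permu) : ugr C = limsup (fun n : ℕ => ((gterm C n : ℝ) : EReal)) atTop := rfl

lemma pcount_mono {A B : Set Permu} (h : A ⊆ B) (n : ℕ) : pcount A n ≤ pcount B n := by
  exact Set.ncard_le_ncard (fun π hπ => ⟨h hπ.1, hπ.2⟩)
    ((finite_fiber n).subset (fun π hπ => hπ.2))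

lemma ugr_nonneg (C : Set Permu) : 0 ≤ ugr C := by
  rw [ugr_eq]
  apply le_limsup_of_frequently_le
  · exact Frequently.of_forall fun n => EReal.coe_nonneg.2 (gterm_nonneg C n)
  · isBoundedDefault

lemma ugr_mono {A B : Set Permu} (h : A ⊆ B) : ugr A ≤ ugr B := by
  rw [ugr_eq, ugr_eq]
  apply limsup_le_limsup
  · apply Eventually.of_forall
    intro n
    exact EReal.coe_le_coe_iff.2 <| Real.rpow_le_rpow (Nat.cast_nonneg _)
      (Nat.cast_le.2 (pcount_mono h n)) (by positivity)
  · isBoundedDefault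
  · isBoundedDefault

lemma ugr_union (A B : Set Permu) : ugr (A ∪ B) = max (ugr A) (ugr B) := by
  refine le_antisymm ?_ (max_le (ugr_mono Set.subset_union_left)
    (ugr_mono Set.subset_union_right))
  set M := max (ugr A) (ugr B) with hM
  rcases eq_top_or_lt_top M with h | hMtop
  · rw [h]; exact le_top
  apply le_of_forall_gt_imp_ge_of_dense
  intro b hb
  have hM0 : (0 : EReal) ≤ M := le_trans (ugr_nonneg A) (le_max_left _ _)
  obtain ⟨c, hMc, hcb⟩ := exists_between hb
  lift c to ℝ using ⟨(lt_of_lt_of_le hcb le_top).ne,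
    (lt_of_lt_of_le EReal.bot_lt_zero (le_of_lt (lt_of_le_of_lt hM0 hMc))).ne'⟩ with r hr
  obtain ⟨c', hMc', hc'c⟩ := exists_between hMc
  lift c' to ℝ using ⟨(lt_of_lt_of_le hc'c (le_of_lt (lt_of_lt_of_le hcb le_top))).ne,
    (lt_of_lt_of_le EReal.bot_lt_zero (le_of_lt (lt_of_le_of_lt hM0 hMc'))).ne'⟩ with r' hr'
  have hr'pos : (0 : ℝ) < r' := by
    have := lt_of_le_of_lt hM0 hMc'
    exact_mod_cast this
  have hr'r : r' < r := EReal.coe_lt_coe_iff.1 hc'c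
  have hAlt : ugr A < (r' : EReal) := lt_of_le_of_lt (le_max_left _ _) hMc'
  have hBlt : ugr B < (r' : EReal) := lt_of_le_of_lt (le_max_right _ _) hMc'
  rw [ugr_eq] at hAlt hBlt
  have hA : ∀ᶠ n in atTop, gterm A n < r' := by
    filter_upwards [eventually_lt_of_limsup_lt hAlt] with n hn
    exact_mod_cast hn
  have hB : ∀ᶠ n in atTop, gterm B n < r' := by
    filter_upwards [eventually_lt_of_limsup_lt hBlt] with n hn
    exact_mod_cast hn
  have h2 : ∀ᶠ n : ℕ in atTop, (2 : ℝ) ^ ((n : ℝ)⁻¹) ≤ r / r' := by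
    have ht : Tendsto (fun n : ℕ => (2 : ℝ) ^ ((n : ℝ)⁻¹)) atTop (nhds 1) := by
      have := (Real.continuousAt_const_rpow (a := (2:ℝ)) (b := 0) two_ne_zero).tendsto.comp
        tendsto_inv_atTop_nhds_zero_nat
      simpa [Real.rpow_zero, Function.comp_def] using this
    exact ht.eventually_le_const ((one_lt_div hr'pos).2 hr'r)
  have key : ∀ᶠ n in atTop, ((gterm (A ∪ B) n : ℝ) : EReal) ≤ (r : EReal) := by
    filter_upwards [hA, hB, h2] with n hAn hBn h2n
    rw [EReal.coe_le_coe_iff]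
    set p : ℝ := (n : ℝ)⁻¹ with hp
    have hp0 : 0 ≤ p := by positivity
    have hcnt : (pcount (A ∪ B) n : ℝ) ≤ 2 * max (pcount A n : ℝ) (pcount B n : ℝ) := by
      have h1 : pcount (A ∪ B) n ≤ pcount A n + pcount B n := by
        unfold pcount
        have : {π ∈ A ∪ B | π.1 = n} = {π ∈ A | π.1 = n} ∪ {π ∈ B | π.1 = n} := by
          ext π; simp only [Set.mem_setOf_eq, Set.mem_union]; tauto
        rw [this]
        exact Set.ncard_union_le _ _
      have h2' : (pcount A n : ℝ) + (pcount B n : ℝ)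
          ≤ 2 * max (pcount A n : ℝ) (pcount B n : ℝ) := by
        rcases le_total (pcount A n : ℝ) (pcount B n : ℝ) with h | h
        · rw [max_eq_right h]; linarith
        · rw [max_eq_left h]; linarith
      calc (pcount (A ∪ B) n : ℝ) ≤ (pcount A n : ℝ) + (pcount B n : ℝ) := by exact_mod_cast h1
        _ ≤ _ := h2'
    have step1 : gterm (A ∪ B) n ≤ (2 * max (pcount A n : ℝ) (pcount B n : ℝ)) ^ p :=
      Real.rpow_le_rpow (Nat.cast_nonneg _) hcnt hp0
    have hmax0 : (0:ℝ) ≤ max (pcount A n : ℝ) (pcount B n : ℝ) :=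
      le_max_of_le_left (Nat.cast_nonneg _)
    have step2 : (2 * max (pcount A n : ℝ) (pcount B n : ℝ)) ^ p
        = 2 ^ p * (max (pcount A n : ℝ) (pcount B n : ℝ)) ^ p :=
      Real.mul_rpow (by norm_num) hmax0
    have step3 : (max (pcount A n : ℝ) (pcount B n : ℝ)) ^ p = max (gterm A n) (gterm B n) := by
      unfold gterm
      rcases le_total (pcount A n : ℝ) (pcount B n : ℝ) with h | h
      · rw [max_eq_right h, max_eq_right (Real.rpow_le_rpow (Nat.cast_nonneg _) h hp0)]
      · rw [max_eq_left h, max_eq_left (Real.rpow_le_rpow (Nat.cast_nonneg _) h hp0)]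
    have hmaxlt : max (gterm A n) (gterm B n) ≤ r' := max_le hAn.le hBn.le
    have hmax0' : (0:ℝ) ≤ max (gterm A n) (gterm B n) :=
      le_max_of_le_left (gterm_nonneg A n)
    calc gterm (A ∪ B) n ≤ 2 ^ p * max (gterm A n) (gterm B n) := by
          rw [← step3, ← step2]; exact step1
      _ ≤ (r / r') * r' := mul_le_mul h2n hmaxlt hmax0'
          (div_nonneg (le_of_lt (lt_trans hr'pos hr'r)) hr'pos.le)
      _ = r := div_mul_cancel₀ r hr'pos.ne'
  have : ugr (A ∪ B) ≤ (r : EReal) := by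
    rw [ugr_eq]
    exact limsup_le_of_le (by isBoundedDefault) key
  exact le_trans this hcb.le

/-- The upper growth rate of a well quasi-ordered permutation class is
attained by an atomic subclass. -/
theorem wqo_ugr_attained_by_atomic_subclass
    (C : Set Permu) (hC : IsPermClass C) (hwqo : Wqo C) :
    ∃ A : Set Permu, IsPermClass A ∧ Atomic A ∧ A ⊆ C ∧ ugr A = ugr C := by
  have main : ∀ D : {D : Set Permu // D ⊆ C ∧ IsPermClass D},
      ∃ A : Set Permu, IsPermClass A ∧ Atomic A ∧ A ⊆ D.1 ∧ ugr A = ugr D.1 := by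
    intro D
    induction D using (wf_downsets hwqo).induction with
    | _ D ih =>
      by_cases hat : Atomic D.1
      · exact ⟨D.1, D.2.2, hat, subset_rfl, rfl⟩
      · unfold Atomic at hat
        push_neg at hat
        obtain ⟨σ, hσ, τ, hτ, hno⟩ := hat
        set D₁ : Set Permu := {z ∈ D.1 | ¬ PLe σ z} with hD₁
        set D₂ : Set Permu := {z ∈ D.1 | ¬ PLe τ z} with hD₂
        have hclass₁ : IsPermClass D₁ := by
          intro a b hab hb
          exact ⟨D.2.2 a b hab hb.1, fun h => hb.2 (h.trans hab)⟩
        have hclass₂ : IsPermClass D₂ := by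
          intro a b hab hb
          exact ⟨D.2.2 a b hab hb.1, fun h => hb.2 (h.trans hab)⟩
        have hsub₁ : D₁ ⊆ D.1 := fun z hz => hz.1
        have hsub₂ : D₂ ⊆ D.1 := fun z hz => hz.1
        have hss₁ : D₁ ⊂ D.1 := ⟨hsub₁, fun h => (h hσ).2 (PLe.refl σ)⟩
        have hss₂ : D₂ ⊂ D.1 := ⟨hsub₂, fun h => (h hτ).2 (PLe.refl τ)⟩
        have hunion : D.1 = D₁ ∪ D₂ := by
          apply Set.eq_of_subset_of_subset
          · intro z hz
            by_cases h1 : PLe σ z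
            · by_cases h2 : PLe τ z
              · exact absurd h2 (hno z hz h1)
              · exact Or.inr ⟨hz, h2⟩
            · exact Or.inl ⟨hz, h1⟩
          · exact Set.union_subset hsub₁ hsub₂
        obtain ⟨A₁, hA₁c, hA₁a, hA₁s, hA₁u⟩ :=
          ih ⟨D₁, hsub₁.trans D.2.1, hclass₁⟩ hss₁
        obtain ⟨A₂, hA₂c, hA₂a, hA₂s, hA₂u⟩ :=
          ih ⟨D₂, hsub₂.trans D.2.1, hclass₂⟩ hss₂
        have hmax : ugr D.1 = max (ugr D₁) (ugr D₂) := by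
          rw [hunion, ugr_union]
        rcases le_total (ugr D₁) (ugr D₂) with h | h
        · exact ⟨A₂, hA₂c, hA₂a, hA₂s.trans hsub₂, by rw [hA₂u, hmax, max_eq_right h]⟩
        · exact ⟨A₁, hA₁c, hA₁a, hA₁s.trans hsub₁, by rw [hA₁u, hmax, max_eq_left h]⟩
  exact main ⟨C, subset_rfl, hC⟩
end
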